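/- Let Ω, κ ∈ ℝ with 1/3 < Ω² < 1, and set r = (1 + Ω² + √(8Ω²(1−Ω²)))/(1 − 3Ω²). Then r < −1, and a sequence u : ℕ → ℝ satisfies u(0) = 0, the recurrence (3Ω² − 1)·(u(m) + u(m+2)) + 2·(1+Ω²)·u(m+1) + 2κ = 0 for every m ∈ ℕ, and u(m) ≥ 0 for all m ∈ ℕ, if and only if κ ≤ 0 and u(m) = −(κ/(4Ω²))·(1 − r^(−m)) for all m ∈ ℕ. -/

import Mathlib

set_option maxHeartbeats 1000000

theorem statement17 (Ω κ : ℝ) (h1 : 1 / 3 < Ω ^ 2) (h2 : Ω ^ 2 < 1)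
    (r : ℝ) (hr : r = (1 + Ω ^ 2 + Real.sqrt (8 * Ω ^ 2 * (1 - Ω ^ 2))) / (1 - 3 * Ω ^ 2)) :
    r < -1 ∧
    (∀ u : ℕ → ℝ,
      (u 0 = 0 ∧
        (∀ m : ℕ, (3 * Ω ^ 2 - 1) * (u m + u (m + 2)) + 2 * (1 + Ω ^ 2) * u (m + 1)
          + 2 * κ = 0) ∧
        (∀ m : ℕ, 0 ≤ u m)) ↔
      (κ ≤ 0 ∧ ∀ m : ℕ, u m = -(κ / (4 * Ω ^ 2)) * (1 - r ^ (-(m : ℤ))))) := by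
  have hΩ2 : (0:ℝ) < Ω ^ 2 := by nlinarith
  set a : ℝ := 3 * Ω ^ 2 - 1 with ha_def
  set b : ℝ := 1 + Ω ^ 2 with hb_def
  have ha : 0 < a := by rw [ha_def]; nlinarith
  have hD : (0:ℝ) < 8 * Ω ^ 2 * (1 - Ω ^ 2) := by nlinarith
  set q : ℝ := Real.sqrt (8 * Ω ^ 2 * (1 - Ω ^ 2)) with hq_def
  have hq0 : 0 < q := Real.sqrt_pos.mpr hD
  have hq2 : q ^ 2 = 8 * Ω ^ 2 * (1 - Ω ^ 2) := Real.sq_sqrt hD.le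
  have h13 : 1 - 3 * Ω ^ 2 = -a := by rw [ha_def]; ring
  have hra : r * a = -(b + q) := by
    rw [hr, h13, div_neg, neg_mul, div_mul_cancel₀ _ ha.ne']
  have hba : a < b := by rw [ha_def, hb_def]; nlinarith
  have hrneg : r < -1 := by nlinarith [hra, ha, hq0, hba]
  have hr0 : r < 0 := by linarith
  have hrne : r ≠ 0 := hr0.ne
  have hchar : a * r ^ 2 + 2 * b * r + a = 0 := by
    have key : a * (a * r ^ 2 + 2 * b * r + a) = 0 := by
      have e : a * (a * r ^ 2 + 2 * b * r + a) = (r * a) ^ 2 + 2 * b * (r * a) + a ^ 2 := by ring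
      rw [e, hra, ha_def, hb_def]
      linear_combination hq2
    exact (mul_eq_zero.mp key).resolve_left ha.ne'
  set s : ℝ := r⁻¹ with hs_def
  have hsr : r * s = 1 := mul_inv_cancel₀ hrne
  have hs_char : a * s ^ 2 + 2 * b * s + a = 0 := by
    linear_combination s ^ 2 * hchar - (a * (1 + r * s) + 2 * b * s) * hsr
  have hs_neg : s < 0 := by rw [hs_def]; exact inv_neg''.mpr hr0
  have hs_gt : -1 < s := by
    have h1r : 1 < -r := by linarith
    have h2r : (-r)⁻¹ < 1 := inv_lt_one_of_one_lt₀ h1r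
    rw [inv_neg] at h2r
    rw [hs_def]; linarith
  have hsabs : |s| ≤ 1 := by rw [abs_le]; constructor <;> linarith
  set c : ℝ := -(κ / (4 * Ω ^ 2)) with hc_def
  have hc : 8 * Ω ^ 2 * c + 2 * κ = 0 := by rw [hc_def]; linear_combination (-2) * (div_mul_cancel₀ κ (mul_pos four_pos hΩ2).ne')
  have hab : a + b = 4 * Ω ^ 2 := by rw [ha_def, hb_def]; ring
  have hz : ∀ m : ℕ, r ^ (-(m:ℤ)) = s ^ m := by
    intro m; rw [zpow_neg, zpow_natCast, hs_def, inv_pow]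
  have hcκ : c * (4 * Ω ^ 2) = -κ := by rw [hc_def, neg_mul, div_mul_cancel₀ _ (mul_pos four_pos hΩ2).ne']
  clear_value a b q s c
  refine ⟨hrneg, fun u => ⟨?_, ?_⟩⟩
  · rintro ⟨h0, hrec, hpos⟩
    have hrs : r - s < 0 := by linarith
    obtain ⟨α, hu1⟩ : ∃ α : ℝ, α * (r - s) = u 1 - c * (1 - s) :=
      ⟨(u 1 - c * (1 - s)) / (r - s), div_mul_cancel₀ _ hrs.ne⟩
    obtain ⟨β, hβ_def⟩ : ∃ β : ℝ, β = -c - α := ⟨_, rfl⟩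
    have hform : ∀ m, u m = c + α * r ^ m + β * s ^ m := by
      intro m
      induction m using Nat.twoStepInduction with
      | zero => rw [h0, hβ_def]; ring
      | one => linear_combination -hu1 - s * hβ_def
      | more m ih0 ih1 =>
        have key : a * u (m + 2) = a * (c + α * r ^ (m + 2) + β * s ^ (m + 2)) := by
          linear_combination (hrec m) - a * ih0 - 2 * b * ih1 - (α * r ^ m) * hchar
            - (β * s ^ m) * hs_char - hc - 2 * c * hab
        exact mul_left_cancel₀ ha.ne' key
    have hβb : ∀ m : ℕ, |β * s ^ m| ≤ |β| := by
      intro m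
      rw [abs_mul, abs_pow]
      calc |β| * |s| ^ m ≤ |β| * 1 :=
            mul_le_mul_of_nonneg_left (pow_le_one₀ (abs_nonneg s) hsabs) (abs_nonneg β)
        _ = |β| := mul_one _
    have hR1 : 1 < -r := by linarith
    have hα0 : α = 0 := by
      by_contra hα
      rcases lt_or_gt_of_ne hα with hneg | hpos'
      · obtain ⟨n, hn⟩ := pow_unbounded_of_one_lt ((c + |β|) / (-α)) hR1
        have hmon : (-r) ^ n ≤ (-r) ^ (2 * n) := pow_le_pow_right₀ (by linarith) (by omega)
        have hev : r ^ (2 * n) = (-r) ^ (2 * n) := by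
          rw [Even.neg_pow ⟨n, by ring⟩]
        have hbig : c + |β| < (-r) ^ n * (-α) := by
          rwa [div_lt_iff₀ (by linarith)] at hn
        have hp := hpos (2 * n)
        rw [hform (2 * n), hev] at hp
        have hβ2 := hβb (2 * n)
        rw [abs_le] at hβ2
        have hint := mul_le_mul_of_nonneg_left hmon (neg_nonneg.mpr hneg.le)
        linarith [hβ2.1, hβ2.2]
      · obtain ⟨n, hn⟩ := pow_unbounded_of_one_lt ((c + |β|) / α) hR1
        have hmon : (-r) ^ n ≤ (-r) ^ (2 * n + 1) := pow_le_pow_right₀ (by linarith) (by omega)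
        have hodd : r ^ (2 * n + 1) = -(-r) ^ (2 * n + 1) := by
          rw [Odd.neg_pow ⟨n, by ring⟩]; ring
        have hbig : c + |β| < (-r) ^ n * α := by
          rwa [div_lt_iff₀ hpos'] at hn
        have hp := hpos (2 * n + 1)
        rw [hform (2 * n + 1), hodd] at hp
        have hβ2 := hβb (2 * n + 1)
        rw [abs_le] at hβ2
        have hint := mul_le_mul_of_nonneg_left hmon hpos'.le
        linarith [hβ2.1, hβ2.2]
    have hβc : β = -c := by rw [hβ_def, hα0]; ring
    have hform' : ∀ m : ℕ, u m = c * (1 - r ^ (-(m:ℤ))) := by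
      intro m; rw [hz m, hform m, hα0, hβc]; ring
    have hcpos : 0 ≤ c := by
      have hp1 := hpos 1
      rw [hform' 1, hz 1, pow_one] at hp1
      nlinarith [hp1, hs_neg, hs_gt]
    refine ⟨by nlinarith [hcκ, hcpos, hΩ2], hform'⟩
  · rintro ⟨hκ, hf⟩
    have hcpos : 0 ≤ c := by nlinarith [hcκ, hκ, hΩ2]
    refine ⟨by rw [hf 0]; norm_num, fun m => ?_, fun m => ?_⟩
    · rw [hf m, hf (m + 1), hf (m + 2), hz m, hz (m + 1), hz (m + 2)]
      linear_combination (-(c * s ^ m)) * hs_char + hc + 2 * c * hab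
    · rw [hf m, hz m]
      have hsm : s ^ m ≤ 1 := by
        calc s ^ m ≤ |s ^ m| := le_abs_self _
          _ ≤ 1 := by rw [abs_pow]; exact pow_le_one₀ (abs_nonneg s) hsabs
      have h1s : 0 ≤ 1 - s ^ m := by linarith
      exact mul_nonneg hcpos h1s
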